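/- For all integers p and q with q ≥ 2, |e − p/q| > 1/((S(q) + 1)!), where S(q) is the Smarandache function, the least positive integer m with q | m!. -/

import Mathlib

open Finset

private lemma exp_one_tsum' : Real.exp 1 = ∑' n : ℕ, ((n.factorial : ℝ))⁻¹ := by
  rw [Real.exp_eq_exp_ℝ, NormedSpace.exp_eq_tsum ℝ]
  simp

private lemma summable_inv_fact' : Summable (fun n : ℕ => ((n.factorial : ℝ))⁻¹) := by
  simpa using Real.summable_pow_div_factorial 1

private lemma tail_eq' (n : ℕ) :
    Real.exp 1 - ∑ j ∈ range (n+1), ((j.factorial : ℝ))⁻¹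
      = ∑' k : ℕ, (((k + (n+1)).factorial : ℝ))⁻¹ := by
  rw [exp_one_tsum']
  have h := Summable.sum_add_tsum_nat_add (f := fun n : ℕ => ((n.factorial : ℝ))⁻¹)
    (n+1) summable_inv_fact'
  linarith

private lemma tail_summable' (n : ℕ) :
    Summable (fun k : ℕ => (((k + (n+1)).factorial : ℝ))⁻¹) :=
  summable_inv_fact'.comp_injective (fun a b => by omega)

private lemma tail_lb' (n : ℕ) :
    (((n+1).factorial : ℝ))⁻¹ < Real.exp 1 - ∑ j ∈ range (n+1), ((j.factorial : ℝ))⁻¹ := by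
  rw [tail_eq']
  have h : ∑ k ∈ ({0, 1} : Finset ℕ), (((k + (n+1)).factorial : ℝ))⁻¹
      ≤ ∑' k : ℕ, (((k + (n+1)).factorial : ℝ))⁻¹ :=
    Summable.sum_le_tsum _ (fun i _ => by positivity) (tail_summable' n)
  rw [Finset.sum_insert (by simp), Finset.sum_singleton] at h
  have h2 : (0:ℝ) < (((1 + (n+1)).factorial : ℝ))⁻¹ := by positivity
  calc (((n+1).factorial : ℝ))⁻¹
      < (((0 + (n+1)).factorial : ℝ))⁻¹ + (((1 + (n+1)).factorial : ℝ))⁻¹ := by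
        simpa using h2
    _ ≤ _ := h

private lemma tail_ub' (n : ℕ) :
    Real.exp 1 - ∑ j ∈ range (n+1), ((j.factorial : ℝ))⁻¹
      ≤ (((n+1).factorial : ℝ))⁻¹ * (((n:ℝ)+2) / ((n:ℝ)+1)) := by
  rw [tail_eq']
  have hlt1 : ((n:ℝ)+2)⁻¹ < 1 := by
    rw [inv_lt_one_iff₀]; right; linarith
  have hgs : Summable (fun k : ℕ => (((n+1).factorial : ℝ))⁻¹ * (((n:ℝ)+2)⁻¹) ^ k) :=
    Summable.mul_left _ (summable_geometric_of_lt_one (by positivity) hlt1)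
  have hle : ∀ k : ℕ, (((k + (n+1)).factorial : ℝ))⁻¹
      ≤ (((n+1).factorial : ℝ))⁻¹ * (((n:ℝ)+2)⁻¹) ^ k := by
    intro k
    rw [inv_pow, ← mul_inv]
    apply inv_anti₀
    · positivity
    · have := Nat.factorial_mul_pow_le_factorial (m := n+1) (n := k)
      calc ((n+1).factorial : ℝ) * ((n:ℝ)+2) ^ k
          = (((n+1).factorial * (n+1+1)^k : ℕ) : ℝ) := by push_cast; ring
        _ ≤ (((n+1+k).factorial : ℕ) : ℝ) := by exact_mod_cast this
        _ = ((k + (n+1)).factorial : ℝ) := by rw [add_comm]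
  have hgeo : (1 - ((n:ℝ)+2)⁻¹)⁻¹ = ((n:ℝ)+2) / ((n:ℝ)+1) := by
    have h1 : (1 - ((n:ℝ)+2)⁻¹) = ((n:ℝ)+1) / ((n:ℝ)+2) := by
      field_simp
      ring
    rw [h1, inv_div]
  calc ∑' k : ℕ, (((k + (n+1)).factorial : ℝ))⁻¹
      ≤ ∑' k : ℕ, (((n+1).factorial : ℝ))⁻¹ * (((n:ℝ)+2)⁻¹) ^ k :=
        Summable.tsum_le_tsum hle (tail_summable' n) hgs
    _ = (((n+1).factorial : ℝ))⁻¹ * (1 - ((n:ℝ)+2)⁻¹)⁻¹ := by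
        rw [tsum_mul_left, tsum_geometric_of_lt_one (by positivity) hlt1]
    _ = (((n+1).factorial : ℝ))⁻¹ * (((n:ℝ)+2) / ((n:ℝ)+1)) := by rw [hgeo]

private lemma key_dist' (n : ℕ) (hn : 2 ≤ n) (m : ℤ) :
    1/((n:ℝ)+1) < |(n.factorial : ℝ) * Real.exp 1 - (m:ℝ)| := by
  set A : ℕ := ∑ j ∈ range (n+1), n.factorial / j.factorial with hA
  have hfpos : (0:ℝ) < (n.factorial : ℝ) := by positivity
  have hnpos : (0:ℝ) < (n:ℝ) := by
    have : (0:ℕ) < n := by omega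
    exact_mod_cast this
  have hAcast : (A:ℝ) = (n.factorial : ℝ) * ∑ j ∈ range (n+1), ((j.factorial : ℝ))⁻¹ := by
    rw [hA, Finset.mul_sum, Nat.cast_sum]
    apply Finset.sum_congr rfl
    intro j hj
    rw [Finset.mem_range] at hj
    have hdvd : j.factorial ∣ n.factorial := Nat.factorial_dvd_factorial (by omega)
    rw [Nat.cast_div hdvd (by positivity), div_eq_mul_inv]
  set r : ℝ := (n.factorial : ℝ) * Real.exp 1 - (A:ℝ) with hr
  have hrlb : 1/((n:ℝ)+1) < r := by
    have h := tail_lb' n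
    have hcalc : (n.factorial : ℝ) * (((n+1).factorial : ℝ))⁻¹ = 1/((n:ℝ)+1) := by
      rw [Nat.factorial_succ]
      push_cast
      rw [mul_inv]
      field_simp
    have h2 := mul_lt_mul_of_pos_left h hfpos
    rw [mul_sub, hcalc] at h2
    rw [hr, hAcast]
    linarith
  have hrub : r < 1/(n:ℝ) := by
    have h := tail_ub' n
    have h2 := mul_le_mul_of_nonneg_left h hfpos.le
    rw [mul_sub] at h2
    have hcalc : (n.factorial : ℝ) * ((((n+1).factorial : ℝ))⁻¹ * (((n:ℝ)+2) / ((n:ℝ)+1)))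
        = ((n:ℝ)+2) / (((n:ℝ)+1) * ((n:ℝ)+1)) := by
      rw [Nat.factorial_succ]
      push_cast
      rw [mul_inv]
      field_simp
    rw [hcalc] at h2
    have hfin : ((n:ℝ)+2) / (((n:ℝ)+1) * ((n:ℝ)+1)) < 1/(n:ℝ) := by
      rw [div_lt_div_iff₀ (by positivity) hnpos]
      nlinarith
    rw [hr, hAcast]
    linarith
  have h2n : (2:ℝ) ≤ (n:ℝ) := by exact_mod_cast hn
  have hgap : 1/((n:ℝ)+1) + 1/(n:ℝ) < 1 := by
    rw [div_add_div _ _ (by positivity) (by positivity), div_lt_one (by positivity)]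
    nlinarith
  rcases le_or_gt m (A:ℤ) with hm | hm
  · have hmA : (m:ℝ) ≤ (A:ℝ) := by exact_mod_cast hm
    have hpos : 1/((n:ℝ)+1) < (n.factorial : ℝ) * Real.exp 1 - (m:ℝ) := by
      have hx : r ≤ (n.factorial : ℝ) * Real.exp 1 - (m:ℝ) := by rw [hr]; linarith
      linarith
    exact lt_of_lt_of_le hpos (le_abs_self _)
  · have hmA : (A:ℝ) + 1 ≤ (m:ℝ) := by exact_mod_cast hm
    have hpos : 1/((n:ℝ)+1) < (m:ℝ) - (n.factorial : ℝ) * Real.exp 1 := by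
      have hx : (m:ℝ) - (n.factorial : ℝ) * Real.exp 1 = ((m:ℝ) - (A:ℝ)) - r := by
        rw [hr]; ring
      rw [hx]
      linarith
    calc 1/((n:ℝ)+1) < (m:ℝ) - (n.factorial : ℝ) * Real.exp 1 := hpos
      _ = -((n.factorial : ℝ) * Real.exp 1 - (m:ℝ)) := by ring
      _ ≤ |(n.factorial : ℝ) * Real.exp 1 - (m:ℝ)| := neg_le_abs _

/-- Sondow's measure: for integers p, q with q ≥ 2,
|e - p/q| > 1/((S(q) + 1)!) where S is the Smarandache function. -/
theorem exp_one_irrationality_measure_smarandache (p q : ℤ) (hq : 2 ≤ q) :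
    |Real.exp 1 - (p : ℝ) / q|
      > 1 / (Nat.factorial
          (sInf {m : ℕ | 1 ≤ m ∧ q ∣ (Nat.factorial m : ℤ)} + 1) : ℝ) := by
  set n : ℕ := sInf {m : ℕ | 1 ≤ m ∧ q ∣ (Nat.factorial m : ℤ)} with hn
  have hne : q.toNat ∈ {m : ℕ | 1 ≤ m ∧ q ∣ (Nat.factorial m : ℤ)} := by
    simp only [Set.mem_setOf_eq]
    refine ⟨by omega, ?_⟩
    have hd : q.toNat ∣ (q.toNat).factorial := Nat.dvd_factorial (by omega) le_rfl
    have h0 : ((q.toNat : ℤ)) ∣ (((q.toNat).factorial : ℕ) : ℤ) :=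
      Int.natCast_dvd_natCast.mpr hd
    rwa [Int.toNat_of_nonneg (by omega)] at h0
  have hmem : n ∈ {m : ℕ | 1 ≤ m ∧ q ∣ (Nat.factorial m : ℤ)} := Nat.sInf_mem ⟨_, hne⟩
  obtain ⟨hn1, hdvd⟩ := hmem
  have hn2 : 2 ≤ n := by
    by_contra hcon
    have hn1' : n = 1 := by omega
    rw [hn1'] at hdvd
    simp [Nat.factorial] at hdvd
    have := Int.le_of_dvd one_pos hdvd
    omega
  obtain ⟨k, hk⟩ := hdvd
  have hfpos : (0:ℝ) < (n.factorial : ℝ) := by positivity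
  have hqpos : (0:ℝ) < (q:ℝ) := by exact_mod_cast (by omega : (0:ℤ) < q)
  have hkpos : (0:ℤ) < k := by
    rcases le_or_gt k 0 with h | h
    · exfalso
      have h1 : (0:ℤ) < (n.factorial : ℤ) := by exact_mod_cast n.factorial_pos
      nlinarith
    · exact h
  have hfrac : (p:ℝ)/(q:ℝ) = ((p*k : ℤ):ℝ) / (n.factorial : ℝ) := by
    have hkr : (0:ℝ) < (k:ℝ) := by exact_mod_cast hkpos
    have hfr : (n.factorial : ℝ) = (q:ℝ) * (k:ℝ) := by exact_mod_cast hk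
    rw [hfr]
    push_cast
    field_simp
  have hkey := key_dist' n hn2 (p*k)
  have heq : Real.exp 1 - (p:ℝ)/(q:ℝ)
      = ((n.factorial : ℝ) * Real.exp 1 - ((p*k : ℤ):ℝ)) / (n.factorial : ℝ) := by
    rw [hfrac]
    field_simp
  rw [gt_iff_lt, heq, abs_div, abs_of_pos hfpos]
  have hfs : ((Nat.factorial (n+1) : ℕ) : ℝ) = ((n:ℝ)+1) * (n.factorial : ℝ) := by
    rw [Nat.factorial_succ]; push_cast; ring
  calc 1 / ((Nat.factorial (n+1) : ℕ) : ℝ)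
      = (1/((n:ℝ)+1)) * (1/(n.factorial : ℝ)) := by
        rw [hfs]; field_simp
    _ < |(n.factorial : ℝ) * Real.exp 1 - ((p*k : ℤ):ℝ)| * (1/(n.factorial : ℝ)) :=
        mul_lt_mul_of_pos_right hkey (by positivity)
    _ = |(n.factorial : ℝ) * Real.exp 1 - ((p*k : ℤ):ℝ)| / (n.factorial : ℝ) := by
        rw [mul_one_div]
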